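/- For a bounded nonnegative random variable L with values in [0,B] and ρ ∈ (0,1), the function c ↦ c + (1/ρ)·E[(L - c)_+] is convex on ℝ and attains its minimum over [0,B] (in fact over all of ℝ) at the (1-ρ)-quantile of L. -/

import Mathlib

open MeasureTheory Filter

private lemma max_convex_pt (x a b t s : ℝ) (ht : 0 ≤ t) (hs : 0 ≤ s) (hts : t + s = 1) :
    max (x - (t*a + s*b)) 0 ≤ t * max (x-a) 0 + s * max (x-b) 0 := by
  have h1 : 0 ≤ t * max (x-a) 0 := mul_nonneg ht (le_max_right _ _)
  have h2 : 0 ≤ s * max (x-b) 0 := mul_nonneg hs (le_max_right _ _)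
  apply max_le _ (by linarith)
  have key : x - (t*a + s*b) = t*(x-a) + s*(x-b) := by
    have : t = 1 - s := by linarith
    subst this; ring
  rw [key]
  gcongr
  · exact le_max_left _ _
  · exact le_max_left _ _

private lemma ptwise_bound (x c q : ℝ) (h : q ≤ x) :
    q - c ≤ max (x-c) 0 - max (x-q) 0 := by
  rw [max_eq_left (by linarith : (0:ℝ) ≤ x - q)]
  have := le_max_left (x - c) (0:ℝ)
  linarith

private lemma integral_bound {Ω : Type*} [MeasurableSpace Ω] (μ : Measure Ω)
    [IsProbabilityMeasure μ] (g : Ω → ℝ) (hg : Integrable g μ) (c q : ℝ)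
    (M : Set Ω) (hM : MeasurableSet M)
    (hin : ∀ ω ∈ M, q ≤ g ω) (hout : ∀ ω ∉ M, g ω ≤ q) :
    (q - c) * (μ M).toReal ≤ (∫ ω, max (g ω - c) 0 ∂μ) - ∫ ω, max (g ω - q) 0 ∂μ := by
  have intc : Integrable (fun ω => max (g ω - c) 0) μ :=
    (hg.sub (integrable_const c)).pos_part
  have intq : Integrable (fun ω => max (g ω - q) 0) μ :=
    (hg.sub (integrable_const q)).pos_part
  rw [← integral_sub intc intq]
  have hind : (q - c) * (μ M).toReal
      = ∫ ω, M.indicator (fun _ => q - c) ω ∂μ := by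
    rw [integral_indicator_const _ hM, smul_eq_mul, mul_comm]; rfl
  rw [hind]
  refine integral_mono ((integrable_const _).indicator hM) (intc.sub intq) fun ω => ?_
  by_cases hω : ω ∈ M
  · rw [Set.indicator_of_mem hω]
    exact ptwise_bound _ _ _ (hin ω hω)
  · rw [Set.indicator_of_notMem hω]
    have hgq : max (g ω - q) 0 = 0 := max_eq_right (by linarith [hout ω hω])
    simp only [Pi.sub_apply, hgq, sub_zero]
    exact le_max_right _ _

theorem stmt_8 {Ω : Type*} [MeasurableSpace Ω] (μ : Measure Ω) [IsProbabilityMeasure μ]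
    (L : Ω → ℝ) (B ρ : ℝ) (hB : 0 ≤ B) (hρ : ρ ∈ Set.Ioo (0:ℝ) 1)
    (hL : Integrable L μ) (hbd : ∀ᵐ ω ∂μ, L ω ∈ Set.Icc (0:ℝ) B) :
    ConvexOn ℝ Set.univ (fun c : ℝ => c + (1/ρ) * ∫ ω, max (L ω - c) 0 ∂μ) ∧
      ∀ c : ℝ,
        (fun c : ℝ => c + (1/ρ) * ∫ ω, max (L ω - c) 0 ∂μ)
            (sInf {β : ℝ | 1 - ρ ≤ (μ {ω | L ω ≤ β}).toReal}) ≤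
          c + (1/ρ) * ∫ ω, max (L ω - c) 0 ∂μ := by
  obtain ⟨hρ0, hρ1⟩ := hρ
  have hInt : ∀ c : ℝ, Integrable (fun ω => max (L ω - c) 0) μ := fun c =>
    (hL.sub (integrable_const c)).pos_part
  have h1ρ : (0:ℝ) ≤ 1/ρ := by positivity
  constructor
  · -- convexity
    refine ⟨convex_univ, ?_⟩
    intro x _ y _ t s ht hs hts
    simp only [smul_eq_mul]
    have hmono : ∫ ω, max (L ω - (t*x+s*y)) 0 ∂μ
        ≤ t * (∫ ω, max (L ω - x) 0 ∂μ) + s * ∫ ω, max (L ω - y) 0 ∂μ := by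
      have := integral_mono (hInt (t*x+s*y))
        (((hInt x).const_mul t).add ((hInt y).const_mul s))
        (fun ω => max_convex_pt (L ω) x y t s ht hs hts)
      simp only [Pi.add_apply] at this
      rwa [integral_add ((hInt x).const_mul t) ((hInt y).const_mul s),
        integral_const_mul, integral_const_mul] at this
    have hmul := mul_le_mul_of_nonneg_left hmono h1ρ
    nlinarith [hmul]
  · -- minimality
    intro c
    simp only []
    set S : Set ℝ := {β : ℝ | 1 - ρ ≤ (μ {ω | L ω ≤ β}).toReal} with hS
    set q : ℝ := sInf S with hqdef
    -- measurable representative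
    obtain ⟨g, hgm, hge⟩ := hL.1
    have hgmeas : Measurable g := hgm.measurable
    have hgint : Integrable g μ := hL.congr hge
    have hmeq : ∀ β : ℝ, μ {ω | L ω ≤ β} = μ {ω | g ω ≤ β} := by
      intro β
      refine measure_congr (hge.mono fun ω h => ?_)
      simp only [eq_iff_iff]
      change (L ω ≤ β) ↔ (g ω ≤ β)
      rw [h]
    have hieq : ∀ c : ℝ, (∫ ω, max (L ω - c) 0 ∂μ) = ∫ ω, max (g ω - c) 0 ∂μ := by
      intro c
      exact integral_congr_ae (hge.mono fun ω h => by simp only [h])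
    have hgbd : ∀ᵐ ω ∂μ, g ω ∈ Set.Icc (0:ℝ) B := by
      filter_upwards [hbd, hge] with ω h1 h2
      rw [← h2]; exact h1
    -- B ∈ S
    have hB1 : μ {ω | g ω ≤ B} = 1 := by
      have huniv : {ω | g ω ≤ B} =ᵐ[μ] (Set.univ : Set Ω) :=
        Filter.eventuallyEq_univ.2 (hgbd.mono fun ω h => h.2)
      rw [measure_congr huniv, measure_univ]
    have hSB : B ∈ S := by
      rw [hS, Set.mem_setOf_eq, hmeq, hB1]
      simp; linarith
    have hSne : S.Nonempty := ⟨B, hSB⟩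
    have hSlb : ∀ β ∈ S, (0:ℝ) ≤ β := by
      intro β hβ
      by_contra hneg
      push_neg at hneg
      have hzero : μ {ω | ¬ (0 ≤ g ω)} = 0 := ae_iff.1 (hgbd.mono fun ω h => h.1)
      have h0 : μ {ω | g ω ≤ β} = 0 := by
        rw [← le_zero_iff, ← hzero]
        apply measure_mono
        intro ω hω
        simp only [Set.mem_setOf_eq] at *
        intro h0; linarith
      rw [hS, Set.mem_setOf_eq, hmeq, h0] at hβ
      simp at hβ; linarith
    have hSbdd : BddBelow S := ⟨0, hSlb⟩
    have hq0 : 0 ≤ q := le_csInf hSne hSlb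
    -- q ∈ S : P(g ≤ q) ≥ 1 - ρ
    have hqS : ENNReal.ofReal (1 - ρ) ≤ μ {ω | g ω ≤ q} := by
      have hsets : {ω | g ω ≤ q} = ⋂ n : ℕ, {ω | g ω ≤ q + 1/(n+1)} := by
        ext ω
        simp only [Set.mem_setOf_eq, Set.mem_iInter]
        constructor
        · intro h n
          have : (0:ℝ) < 1/(n+1) := by positivity
          linarith
        · intro h
          refine le_of_forall_pos_le_add fun ε hε => ?_
          obtain ⟨n, hn⟩ := exists_nat_one_div_lt hε
          have := h n
          push_cast at this ⊢
          linarith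
      rw [hsets]
      have hmeasn : ∀ n : ℕ, MeasurableSet {ω | g ω ≤ q + 1/(n+1)} :=
        fun n => hgmeas measurableSet_Iic
      have hanti : Antitone fun n : ℕ => {ω | g ω ≤ q + 1/(n+1)} := by
        intro n m hnm ω hω
        simp only [Set.mem_setOf_eq] at *
        have : (1:ℝ)/(m+1) ≤ 1/(n+1) := by
          apply one_div_le_one_div_of_le (by positivity)
          push_cast; have := (Nat.cast_le (α := ℝ)).2 hnm; linarith
        linarith
      have htend := tendsto_measure_iInter_atTop (μ := μ)
        (fun n => (hmeasn n).nullMeasurableSet) hanti ⟨0, measure_ne_top _ _⟩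
      refine ge_of_tendsto htend (Filter.Eventually.of_forall fun n => ?_)
      obtain ⟨β, hβS, hβlt⟩ := Real.lt_sInf_add_pos hSne (show (0:ℝ) < 1/(n+1) by positivity)
      have h1 : ENNReal.ofReal (1 - ρ) ≤ μ {ω | g ω ≤ β} := by
        apply ENNReal.ofReal_le_of_le_toReal
        rw [← hmeq]
        exact hβS
      refine h1.trans (measure_mono fun ω hω => ?_)
      simp only [Function.comp, Set.mem_setOf_eq] at *
      push_cast at hβlt ⊢
      linarith
    -- P(g ≥ q) ≥ ρ
    have hofρ : ENNReal.ofReal ρ = 1 - ENNReal.ofReal (1 - ρ) := by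
      rw [← ENNReal.ofReal_one, ← ENNReal.ofReal_sub _ (by linarith : (0:ℝ) ≤ 1 - ρ)]
      norm_num
    have hgeq : ENNReal.ofReal ρ ≤ μ {ω | q ≤ g ω} := by
      have hsets : {ω | q ≤ g ω} = ⋂ n : ℕ, {ω | q - 1/(n+1) < g ω} := by
        ext ω
        simp only [Set.mem_setOf_eq, Set.mem_iInter]
        constructor
        · intro h n
          have : (0:ℝ) < 1/(n+1) := by positivity
          linarith
        · intro h
          by_contra hlt
          push_neg at hlt
          obtain ⟨n, hn⟩ := exists_nat_one_div_lt (show (0:ℝ) < q - g ω by linarith)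
          have := h n
          push_cast at this hn
          linarith
      rw [hsets]
      have hmeasn : ∀ n : ℕ, MeasurableSet {ω | q - 1/(n+1) < g ω} :=
        fun n => measurableSet_lt measurable_const hgmeas
      have hanti : Antitone fun n : ℕ => {ω | q - 1/(n+1) < g ω} := by
        intro n m hnm ω hω
        simp only [Set.mem_setOf_eq] at *
        have : (1:ℝ)/(m+1) ≤ 1/(n+1) := by
          apply one_div_le_one_div_of_le (by positivity)
          push_cast; have := (Nat.cast_le (α := ℝ)).2 hnm; linarith
        linarith
      have htend := tendsto_measure_iInter_atTop (μ := μ)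
        (fun n => (hmeasn n).nullMeasurableSet) hanti ⟨0, measure_ne_top _ _⟩
      refine ge_of_tendsto htend (Filter.Eventually.of_forall fun n => ?_)
      have hβq : q - 1/(n+1) < q := by
        have : (0:ℝ) < 1/(n+1) := by positivity
        linarith
      have hβnS : (q - 1/(n+1)) ∉ S := fun h => absurd (csInf_le hSbdd h) (not_le.2 hβq)
      have hlt : (μ {ω | g ω ≤ q - 1/(n+1)}).toReal < 1 - ρ := by
        rw [hS, Set.mem_setOf_eq, hmeq] at hβnS
        push_neg at hβnS
        exact hβnS
      have hle : μ {ω | g ω ≤ q - 1/(n+1)} ≤ ENNReal.ofReal (1 - ρ) :=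
        (ENNReal.le_ofReal_iff_toReal_le (measure_ne_top _ _) (by linarith)).2 hlt.le
      have hcompl : {ω | q - 1/(n+1) < g ω} = {ω | g ω ≤ q - 1/(n+1)}ᶜ := by
        ext ω; simp [not_le]
      show ENNReal.ofReal ρ ≤ μ {ω | q - 1/(n+1) < g ω}
      rw [hcompl, measure_compl (s := {ω | g ω ≤ q - 1/(n+1)})
        (measurableSet_le hgmeas measurable_const) (measure_ne_top _ _), measure_univ, hofρ]
      exact tsub_le_tsub_left hle 1
    -- P(g > q) ≤ ρ
    have hgtq : μ {ω | q < g ω} ≤ ENNReal.ofReal ρ := by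
      have hcompl : {ω | q < g ω} = {ω | g ω ≤ q}ᶜ := by
        ext ω; simp [not_le]
      rw [hcompl, measure_compl (s := {ω | g ω ≤ q})
        (measurableSet_le hgmeas measurable_const) (measure_ne_top _ _), measure_univ, hofρ]
      exact tsub_le_tsub_left hqS 1
    -- to real versions
    have hm1 : ((μ {ω | q < g ω}).toReal) ≤ ρ :=
      ENNReal.toReal_le_of_le_ofReal (le_of_lt hρ0) hgtq
    have hm2 : ρ ≤ (μ {ω | q ≤ g ω}).toReal :=
      ((ENNReal.ofReal_le_iff_le_toReal (measure_ne_top _ _)).1 hgeq)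
    rw [hieq, hieq]
    -- main inequality
    have key : (∫ ω, max (g ω - q) 0 ∂μ) + (q - c) * ρ ≤ ∫ ω, max (g ω - c) 0 ∂μ := by
      rcases le_total q c with hqc | hcq
      · have hb := integral_bound μ g hgint c q {ω | q < g ω}
          (hgmeas measurableSet_Ioi) (fun ω hω => le_of_lt hω) (fun ω hω => not_lt.1 hω)
        nlinarith [ENNReal.toReal_nonneg (a := μ {ω | q < g ω})]
      · have hb := integral_bound μ g hgint c q {ω | q ≤ g ω}
          (hgmeas measurableSet_Ici) (fun ω hω => hω) (fun ω hω => le_of_lt (not_le.1 hω))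
        nlinarith
    have hmul := mul_le_mul_of_nonneg_left key h1ρ
    rw [mul_add] at hmul
    have hρinv : (1/ρ) * ((q - c) * ρ) = q - c := by field_simp
    rw [hρinv] at hmul
    linarith
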